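/- arXiv:2312.17405 — 2 statements merged into one kernel-verified Lean document; each statement's English description precedes it below -/
import Mathlib

section
/- Let λ ∈ (0,1) be irrational with convergents p_m/q_m, let η = p − qλ with p, q positive integers and −λ < η < 1, and let T be the circle-rotation-type map T(x) = x + λ if x < 0, T(x) = x − 1 if x > 0, T(0) = −η on [−1, λ). Suppose m is such that q_m ≥ q and p_m ≥ p (not both equalities simultaneously violated), and set h_{m+1} = (q_{m+1} − q) + (p_{m+1} − p) + 1. Then for all integers t with 1 ≤ t < h_{m+1}, |T^t(0)| ≥ |q_m λ − p_m|. -/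
noncomputable section

/-- The Gauss map `g(x) = 1/x - ⌊1/x⌋`. -/
def gaussMap (x : ℝ) : ℝ := 1 / x - ⌊(1 : ℝ) / x⌋

/-- `cfA lam k` is the continued fraction coefficient `λ_{k+1}` of `lam = [0; λ₁, λ₂, ...]`,
i.e. `λ_{k+1} = ⌊1 / g^k(lam)⌋`. -/
def cfA (lam : ℝ) (k : ℕ) : ℤ := ⌊1 / (gaussMap^[k] lam)⌋

/-- Shifted convergent numerators: `num lam (m+1) = p_m`, with `num lam 0 = p_{-1} = 1`. -/
def num (lam : ℝ) : ℕ → ℤ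
  | 0 => 1
  | 1 => 0
  | m + 2 => cfA lam m * num lam (m + 1) + num lam m

/-- Shifted convergent denominators: `den lam (m+1) = q_m`, with `den lam 0 = q_{-1} = 0`. -/
def den (lam : ℝ) : ℕ → ℤ
  | 0 => 0
  | 1 => 1
  | m + 2 => cfA lam m * den lam (m + 1) + den lam m

/-- Semiconvergent numerator `P_{m,n}`: `P_{m,0} = p_m` and `P_{m,n} = n·p_m + p_{m-1}` for `n ≥ 1`. -/
def Ps (lam : ℝ) (m n : ℕ) : ℤ :=
  if n = 0 then num lam (m + 1) else n * num lam (m + 1) + num lam m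

/-- Semiconvergent denominator `Q_{m,n}`: `Q_{m,0} = q_m` and `Q_{m,n} = n·q_m + q_{m-1}` for `n ≥ 1`. -/
def Qs (lam : ℝ) (m n : ℕ) : ℤ :=
  if n = 0 then den lam (m + 1) else n * den lam (m + 1) + den lam m

/-- The semiconvergent error `Δ_{m,n}(λ) = Q_{m,n}·λ − P_{m,n}`. -/
def Del (lam : ℝ) (m n : ℕ) : ℝ := (Qs lam m n : ℝ) * lam - (Ps lam m n : ℝ)

/-- The error `Δ_{m-1,0}(λ) = q_{m-1}·λ − p_{m-1}` (with `Δ_{-1,0} = −1` for `m = 0`). -/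
def DelPrev (lam : ℝ) (m : ℕ) : ℝ := (den lam m : ℝ) * lam - (num lam m : ℝ)

/-- The baseline interval map `T` on `[−1, λ)`: `T(x) = x + λ` for `x < 0`, `T(x) = x − 1` for
`x > 0`, and `T(0) = −η`. -/
def Tmap (lam eta : ℝ) (x : ℝ) : ℝ :=
  if x < 0 then x + lam else if 0 < x then x - 1 else -eta

lemma gauss_iter (lam : ℝ) (h : lam ∈ Set.Ioo (0:ℝ) 1) (hirr : Irrational lam) (k : ℕ) :
    gaussMap^[k] lam ∈ Set.Ioo (0:ℝ) 1 ∧ Irrational (gaussMap^[k] lam) := by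
  induction k with
  | zero => exact ⟨h, hirr⟩
  | succ k ih =>
    obtain ⟨⟨hx0, hx1⟩, hxi⟩ := ih
    rw [Function.iterate_succ_apply']
    set x := gaussMap^[k] lam with hxdef
    have hinv : Irrational (1 / x) := by rw [one_div]; exact hxi.inv
    have hfr : gaussMap x = Int.fract (1/x) := rfl
    have hgi : Irrational (gaussMap x) := by
      unfold gaussMap; exact hinv.sub_intCast _
    refine ⟨⟨?_, ?_⟩, hgi⟩
    · rw [hfr]
      rcases (Int.fract_nonneg (1/x)).lt_or_eq with hlt | heq
      · exact hlt
      · exfalso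
        have hi : Irrational (Int.fract (1/x)) := by
          unfold Int.fract; exact hinv.sub_intCast _
        exact hi.ne_int 0 (by rw [← heq]; norm_num)
    · rw [hfr]; exact Int.fract_lt_one _

lemma cfA_pos (lam : ℝ) (h : lam ∈ Set.Ioo (0:ℝ) 1) (hirr : Irrational lam) (k : ℕ) :
    1 ≤ cfA lam k := by
  obtain ⟨⟨hx0, hx1⟩, _⟩ := gauss_iter lam h hirr k
  have : (1:ℝ) < 1 / (gaussMap^[k] lam) := one_lt_one_div hx0 hx1
  exact Int.le_floor.mpr (by exact_mod_cast this.le)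

lemma delprev_succ (lam : ℝ) (h : lam ∈ Set.Ioo (0:ℝ) 1) (hirr : Irrational lam) (k : ℕ) :
    DelPrev lam (k + 1) = -(gaussMap^[k] lam) * DelPrev lam k := by
  induction k with
  | zero =>
    have e0 : DelPrev lam 0 = -1 := by norm_num [DelPrev, den, num]
    have e1 : DelPrev lam 1 = lam := by norm_num [DelPrev, den, num]
    simp only [Function.iterate_zero, id_eq, e0, e1]
    ring
  | succ k ih =>
    obtain ⟨⟨hx0, hx1⟩, _⟩ := gauss_iter lam h hirr k
    have hxne : gaussMap^[k] lam ≠ 0 := ne_of_gt hx0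
    have hrec : DelPrev lam (k + 2) = (cfA lam k : ℝ) * DelPrev lam (k+1) + DelPrev lam k := by
      simp only [DelPrev]
      rw [show den lam (k+2) = cfA lam k * den lam (k+1) + den lam k from rfl,
          show num lam (k+2) = cfA lam k * num lam (k+1) + num lam k from rfl]
      push_cast; ring
    rw [Function.iterate_succ_apply']
    set x := gaussMap^[k] lam with hxdef
    have hg : gaussMap x = 1/x - (cfA lam k : ℝ) := by
      unfold gaussMap cfA; rw [← hxdef]
    rw [hrec, hg, ih]
    field_simp
    ring

lemma delprev_ne (lam : ℝ) (h : lam ∈ Set.Ioo (0:ℝ) 1) (hirr : Irrational lam) (k : ℕ) :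
    DelPrev lam k ≠ 0 := by
  induction k with
  | zero => norm_num [DelPrev, den, num]
  | succ k ih =>
    rw [delprev_succ lam h hirr]
    obtain ⟨⟨hx0, _⟩, _⟩ := gauss_iter lam h hirr k
    exact mul_ne_zero (neg_ne_zero.mpr (ne_of_gt hx0)) ih

lemma delprev_abs_succ (lam : ℝ) (h : lam ∈ Set.Ioo (0:ℝ) 1) (hirr : Irrational lam) (k : ℕ) :
    |DelPrev lam (k+1)| = (gaussMap^[k] lam) * |DelPrev lam k| := by
  obtain ⟨⟨hx0, _⟩, _⟩ := gauss_iter lam h hirr k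
  rw [delprev_succ lam h hirr, abs_mul, abs_neg, abs_of_pos hx0]

lemma delprev_abs_lt_one (lam : ℝ) (h : lam ∈ Set.Ioo (0:ℝ) 1) (hirr : Irrational lam) (k : ℕ) :
    |DelPrev lam (k+1)| < 1 := by
  induction k with
  | zero =>
    have h1 : DelPrev lam 1 = lam := by norm_num [DelPrev, den, num]
    rw [h1, abs_of_pos h.1]; exact h.2
  | succ k ih =>
    rw [delprev_abs_succ lam h hirr]
    obtain ⟨⟨hx0, hx1⟩, _⟩ := gauss_iter lam h hirr (k+1)
    calc gaussMap^[k+1] lam * |DelPrev lam (k+1)| < 1 * 1 :=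
          mul_lt_mul' hx1.le ih (abs_nonneg _) one_pos
      _ = 1 := one_mul 1

lemma delprev_mul_neg (lam : ℝ) (h : lam ∈ Set.Ioo (0:ℝ) 1) (hirr : Irrational lam) (k : ℕ) :
    DelPrev lam k * DelPrev lam (k+1) < 0 := by
  rw [delprev_succ lam h hirr]
  obtain ⟨⟨hx0, _⟩, _⟩ := gauss_iter lam h hirr k
  have hne := delprev_ne lam h hirr k
  have habs : 0 < |DelPrev lam k| := abs_pos.mpr hne
  nlinarith [mul_pos hx0 (mul_pos habs habs), abs_mul_abs_self (DelPrev lam k)]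

lemma den_bounds (lam : ℝ) (h : lam ∈ Set.Ioo (0:ℝ) 1) (hirr : Irrational lam) (k : ℕ) :
    0 ≤ den lam k ∧ 1 ≤ den lam (k+1) := by
  induction k with
  | zero => simp [den]
  | succ k ih =>
    obtain ⟨h0, h1⟩ := ih
    have ha := cfA_pos lam h hirr k
    refine ⟨by linarith, ?_⟩
    show 1 ≤ cfA lam k * den lam (k+1) + den lam k
    nlinarith

lemma den_mono (lam : ℝ) (h : lam ∈ Set.Ioo (0:ℝ) 1) (hirr : Irrational lam) (k : ℕ) :
    den lam (k+1) ≤ den lam (k+2) := by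
  have ha := cfA_pos lam h hirr k
  obtain ⟨h0, h1⟩ := den_bounds lam h hirr k
  show den lam (k+1) ≤ cfA lam k * den lam (k+1) + den lam k
  nlinarith

lemma det_id (lam : ℝ) (k : ℕ) :
    den lam (k+1) * num lam k - den lam k * num lam (k+1) = (-1)^k := by
  induction k with
  | zero => simp [den, num]
  | succ k ih =>
    show (cfA lam k * den lam (k+1) + den lam k) * num lam (k+1)
        - den lam (k+1) * (cfA lam k * num lam (k+1) + num lam k) = (-1)^(k+1)
    rw [pow_succ]
    linear_combination (-1 : ℤ) * ih

lemma abs_helper (x y : ℝ) (hxy : 0 ≤ x * y) : |y| ≤ |x + y| := by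
  rcases le_total 0 y with hy | hy <;> rcases le_total 0 x with hx | hx
  · rw [abs_of_nonneg hy, abs_of_nonneg (by linarith)]; linarith
  · have h0 : x * y = 0 := le_antisymm (mul_nonpos_of_nonpos_of_nonneg hx hy) hxy
    rcases mul_eq_zero.mp h0 with h | h
    · simp [h]
    · simp [h]
  · have h0 : x * y = 0 := le_antisymm (mul_nonpos_of_nonneg_of_nonpos hx hy) hxy
    rcases mul_eq_zero.mp h0 with h | h
    · simp [h]
    · simp [h]
  · rw [abs_of_nonpos hy, abs_of_nonpos (by linarith)]; linarith

lemma best_approx (lam : ℝ) (h : lam ∈ Set.Ioo (0:ℝ) 1) (hirr : Irrational lam) (m : ℕ)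
    (A B : ℤ) (hB1 : 1 ≤ B) (hB2 : B ≤ den lam (m+2))
    (hne : ¬(A = num lam (m+2) ∧ B = den lam (m+2))) :
    |DelPrev lam (m+1)| ≤ |(B:ℝ) * lam - A| := by
  set N1 := num lam (m+1) with hN1
  set N2 := num lam (m+2) with hN2
  set D1 := den lam (m+1) with hD1
  set D2 := den lam (m+2) with hD2
  obtain ⟨s, hss, hdet⟩ : ∃ s : ℤ, s * s = 1 ∧ D2 * N1 - D1 * N2 = s :=
    ⟨(-1)^(m+1), by rw [← mul_pow]; norm_num, det_id lam (m+1)⟩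
  set α : ℤ := s * (B * N1 - A * D1) with hα
  set β : ℤ := -(s * (B * N2 - A * D2)) with hβ
  have hBid : α * D2 + β * D1 = B := by
    rw [hα, hβ]
    linear_combination (s * B) * hdet + B * hss
  have hAid : α * N2 + β * N1 = A := by
    rw [hα, hβ]
    linear_combination (s * A) * hdet + A * hss
  have hD1pos : 1 ≤ D1 := (den_bounds lam h hirr m).2
  have hD2pos : 1 ≤ D2 := (den_bounds lam h hirr (m+1)).2
  have hBr : (α : ℝ) * D2 + β * D1 = B := by exact_mod_cast congrArg (Int.cast : ℤ → ℝ) hBid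
  have hAr : (α : ℝ) * N2 + β * N1 = A := by exact_mod_cast congrArg (Int.cast : ℤ → ℝ) hAid
  have key : (B:ℝ) * lam - A = α * DelPrev lam (m+2) + β * DelPrev lam (m+1) := by
    simp only [DelPrev, ← hN1, ← hN2, ← hD1, ← hD2]
    linear_combination hAr - lam * hBr
  have he1 : DelPrev lam (m+1) ≠ 0 := delprev_ne lam h hirr (m+1)
  have hprod : DelPrev lam (m+1) * DelPrev lam (m+2) < 0 := delprev_mul_neg lam h hirr (m+1)
  rcases eq_or_ne β 0 with hb0 | hb0
  · exfalso
    rw [hb0] at hBid hAid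
    simp only [zero_mul, add_zero] at hBid hAid
    have h5 : 1 ≤ α := by nlinarith
    have h6 : α ≤ 1 := by nlinarith
    have hα1 : α = 1 := le_antisymm h6 h5
    rw [hα1, one_mul] at hBid hAid
    exact hne ⟨hAid.symm, hBid.symm⟩
  · have h1b : (1:ℝ) ≤ |(β:ℝ)| := by
      have : (1:ℤ) ≤ |β| := Int.one_le_abs hb0
      exact_mod_cast this
    rcases eq_or_ne α 0 with ha0 | ha0
    · rw [key, ha0]
      simp only [Int.cast_zero, zero_mul, zero_add, abs_mul]
      nlinarith [abs_nonneg (DelPrev lam (m+1))]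
    · rcases lt_trichotomy (α * β) 0 with hab | hab | hab
      · rw [key]
        have hsame : 0 ≤ ((α:ℝ) * DelPrev lam (m+2)) * ((β:ℝ) * DelPrev lam (m+1)) := by
          have heq : ((α:ℝ) * DelPrev lam (m+2)) * ((β:ℝ) * DelPrev lam (m+1))
              = ((α:ℝ) * β) * (DelPrev lam (m+1) * DelPrev lam (m+2)) := by ring
          rw [heq]
          have habr : ((α:ℝ) * β) < 0 := by exact_mod_cast hab
          nlinarith
        have habs := abs_helper ((α:ℝ) * DelPrev lam (m+2)) ((β:ℝ) * DelPrev lam (m+1)) hsame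
        calc |DelPrev lam (m+1)| ≤ |(β:ℝ)| * |DelPrev lam (m+1)| := by
              nlinarith [abs_nonneg (DelPrev lam (m+1))]
          _ = |(β:ℝ) * DelPrev lam (m+1)| := (abs_mul _ _).symm
          _ ≤ |(α:ℝ) * DelPrev lam (m+2) + (β:ℝ) * DelPrev lam (m+1)| := habs
      · exact absurd hab (mul_ne_zero ha0 hb0)
      · exfalso
        rcases lt_trichotomy α 0 with haneg | h0 | hapos
        · have hbneg : β < 0 := by nlinarith
          nlinarith
        · exact ha0 h0
        · have hbpos : 0 < β := by nlinarith
          nlinarith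

lemma irr_ne_rat (lam : ℝ) (hirr : Irrational lam) (A B : ℤ) (hB : B ≠ 0) :
    (B:ℝ) * lam ≠ A := by
  intro hEq
  apply hirr
  refine ⟨(A : ℚ) / (B : ℚ), ?_⟩
  have hBne : (B:ℝ) ≠ 0 := Int.cast_ne_zero.mpr hB
  push_cast
  field_simp
  linear_combination -hEq

lemma orbit (lam : ℝ) (h : lam ∈ Set.Ioo (0:ℝ) 1) (hirr : Irrational lam)
    (p q : ℕ) (hp : 0 < p) (hq : 0 < q)
    (eta : ℝ) (heta : eta = (p : ℝ) - (q : ℝ) * lam)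
    (heta1 : -lam < eta) (heta2 : eta < 1) :
    ∀ t : ℕ, 1 ≤ t → ∃ A B : ℤ,
      (Tmap lam eta)^[t] 0 = (B:ℝ) * lam - A ∧ (q:ℤ) ≤ B ∧ (p:ℤ) ≤ A ∧
      A + B = p + q + t - 1 ∧ -1 < (B:ℝ) * lam - A ∧ (B:ℝ) * lam - A < lam := by
  intro t
  induction t with
  | zero => intro ht; omega
  | succ t ih =>
    intro ht
    rcases Nat.eq_or_lt_of_le ht with h1 | h1
    · refine ⟨p, q, ?_, le_refl _, le_refl _, by omega, ?_, ?_⟩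
      · have ht0 : t = 0 := by omega
        subst ht0
        simp only [zero_add, Function.iterate_one, Tmap]
        rw [if_neg (lt_irrefl 0), if_neg (lt_irrefl 0), heta]
        push_cast; ring
      · rw [heta] at heta2; push_cast; linarith
      · rw [heta] at heta1; push_cast; linarith
    · have ht' : 1 ≤ t := by omega
      obtain ⟨A, B, hEq, hBq, hAp, hsum, hlow, hhigh⟩ := ih ht'
      have hx_ne : (B:ℝ) * lam - A ≠ 0 := sub_ne_zero.mpr (irr_ne_rat lam hirr A B (by omega))
      rw [Function.iterate_succ_apply', hEq]
      rcases hx_ne.lt_or_gt with hneg | hpos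
      · refine ⟨A, B + 1, ?_, by omega, hAp, by omega, ?_, ?_⟩
        · simp only [Tmap, if_pos hneg]; push_cast; ring
        · push_cast; linarith [h.1]
        · push_cast; linarith
      · refine ⟨A + 1, B, ?_, hBq, by omega, by omega, ?_, ?_⟩
        · simp only [Tmap, if_neg (asymm hpos), if_pos hpos]
          push_cast; ring
        · push_cast; linarith
        · push_cast; linarith [h.2]

/-- Let `λ ∈ (0,1)` be irrational with convergents `p_m/q_m`, `η = p − qλ` with `p, q` positive
integers and `−λ < η < 1`. If `q_m ≥ q` and `p_m ≥ p`, then for all `1 ≤ t < h_{m+1}`, where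
`h_{m+1} = (q_{m+1} − q) + (p_{m+1} − p) + 1`, one has `|T^t(0)| ≥ |q_m λ − p_m|`. -/
theorem stmt14 (lam : ℝ) (h : lam ∈ Set.Ioo (0 : ℝ) 1) (hirr : Irrational lam)
    (p q : ℕ) (hp : 0 < p) (hq : 0 < q)
    (eta : ℝ) (heta : eta = (p : ℝ) - (q : ℝ) * lam)
    (heta1 : -lam < eta) (heta2 : eta < 1)
    (m : ℕ) (hqm : (q : ℤ) ≤ den lam (m + 1)) (hpm : (p : ℤ) ≤ num lam (m + 1))
    (t : ℕ) (ht1 : 1 ≤ t)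
    (ht2 : (t : ℤ) < (den lam (m + 2) - q) + (num lam (m + 2) - p) + 1) :
    |(den lam (m + 1) : ℝ) * lam - (num lam (m + 1) : ℝ)| ≤ |(Tmap lam eta)^[t] 0| := by
  obtain ⟨A, B, hEq, hBq, hAp, hsum, hlow, hhigh⟩ :=
    orbit lam h hirr p q hp hq eta heta heta1 heta2 t ht1
  set N2 := num lam (m+2) with hN2
  set D2 := den lam (m+2) with hD2
  have hsum' : A + B ≤ N2 + D2 - 1 := by omega
  have hBbound : B ≤ D2 := by
    by_contra hc
    push_neg at hc
    have he2 : |DelPrev lam (m+2)| < 1 := delprev_abs_lt_one lam h hirr (m+1)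
    have h1 : (D2:ℝ) * lam ≤ ((B:ℝ) - 1) * lam := by
      apply mul_le_mul_of_nonneg_right _ h.1.le
      have hz : (D2:ℤ) ≤ B - 1 := by omega
      exact_mod_cast hz
    have h2 : (N2:ℝ) - 1 < (D2:ℝ) * lam := by
      have hdel : (D2:ℝ) * lam - N2 = DelPrev lam (m+2) := by simp [DelPrev, hN2, hD2]
      nlinarith [neg_abs_le (DelPrev lam (m+2))]
    have h3 : (N2:ℝ) - 1 < (A:ℝ) := by nlinarith
    have h4 : N2 ≤ A := by
      have hz : (N2:ℤ) - 1 < A := by exact_mod_cast h3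
      omega
    omega
  have hne : ¬(A = N2 ∧ B = D2) := by
    rintro ⟨hA, hB⟩; omega
  rw [hEq]
  have hba := best_approx lam h hirr m A B (by omega) hBbound hne
  simpa [DelPrev] using hba
end
end

section
/- Let λ ∈ (0,1) be irrational and let m be even with m ≥ 2. For all j ≥ 0 and all n with 0 ≤ n < λ_{m+j+1}, the parallelogram S_{m+j,n}(λ) scales to S_{j,n}(g^m(λ)): precisely, (1/|Δ_{m−1,0}(λ)|)·S_{m+j,n}(λ) = S_{j,n}(g^m(λ)), where S_{m,n}(λ) is defined for even m as (C₀ − Δ_{m,0}(λ)) ∩ C_c ∩ (C_c − Δ_{m,n+1}(λ)) ∩ (C_{d+1} − (nΔ_{m,0}(λ) + Δ_{m−1,0}(λ))) and for odd m as (C₀ − (nΔ_{m,0}(λ) + Δ_{m−1,0}(λ))) ∩ C_c ∩ (C_c − Δ_{m,n+1}(λ)) ∩ (C_{d+1} − Δ_{m,0}(λ)). -/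
noncomputable section

/-- The cone `C₀ = {z` in the closed upper half-plane `: Arg z ∈ [0, α₀)}`. -/
def coneC0 (a0 : ℝ) : Set ℂ := {z | 0 ≤ z.im ∧ Complex.arg z ∈ Set.Ico 0 a0}

/-- The cone `C_{d+1} = {z` in the closed upper half-plane `: Arg z ∈ (π − α_{d+1}, π]}`. -/
def coneCd1 (a1 : ℝ) : Set ℂ :=
  {z | 0 ≤ z.im ∧ Complex.arg z ∈ Set.Ioc (Real.pi - a1) Real.pi}

/-- The middle cone `C_c = {0} ∪ {z ∈ ℍ : Arg z ∈ [α₀, π − α_{d+1}]}`. -/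
def coneCc (a0 a1 : ℝ) : Set ℂ :=
  {0} ∪ {z | 0 < z.im ∧ Complex.arg z ∈ Set.Icc a0 (Real.pi - a1)}

/-- Translation of a subset of `ℂ` by a real number: `A + c = {a + c : a ∈ A}`. -/
def trSet (A : Set ℂ) (c : ℝ) : Set ℂ := (fun z => z + (c : ℂ)) '' A

/-- Scaling of a subset of `ℂ` by a real number: `r·A = {r·a : a ∈ A}`. -/
def scSet (r : ℝ) (A : Set ℂ) : Set ℂ := (fun z => (r : ℂ) * z) '' A

/-- The parallelogram `S_{m,n}(λ)`, defined for even `m` as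
`(C₀ − Δ_{m,0}) ∩ C_c ∩ (C_c − Δ_{m,n+1}) ∩ (C_{d+1} − (nΔ_{m,0} + Δ_{m−1,0}))` and for odd `m` as
`(C₀ − (nΔ_{m,0} + Δ_{m−1,0})) ∩ C_c ∩ (C_c − Δ_{m,n+1}) ∩ (C_{d+1} − Δ_{m,0})`. -/
def Smn (a0 a1 lam : ℝ) (m n : ℕ) : Set ℂ :=
  if Even m then
    trSet (coneC0 a0) (-(Del lam m 0)) ∩ coneCc a0 a1 ∩
      trSet (coneCc a0 a1) (-(Del lam m (n + 1))) ∩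
      trSet (coneCd1 a1) (-((n : ℝ) * Del lam m 0 + DelPrev lam m))
  else
    trSet (coneC0 a0) (-((n : ℝ) * Del lam m 0 + DelPrev lam m)) ∩ coneCc a0 a1 ∩
      trSet (coneCc a0 a1) (-(Del lam m (n + 1))) ∩ trSet (coneCd1 a1) (-(Del lam m 0))

lemma gauss_mem (lam : ℝ) (h : lam ∈ Set.Ioo (0:ℝ) 1) (hirr : Irrational lam) :
    gaussMap lam ∈ Set.Ioo (0:ℝ) 1 ∧ Irrational (gaussMap lam) := by
  have h1 : Irrational (1 / lam) := by simpa [one_div] using hirr.inv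
  have hi : Irrational (gaussMap lam) := by
    simpa [gaussMap] using h1.sub_intCast ⌊(1:ℝ)/lam⌋
  have hfr : gaussMap lam = Int.fract (1/lam) := rfl
  refine ⟨⟨?_, ?_⟩, hi⟩
  · rcases (Int.fract_nonneg ((1:ℝ)/lam)).lt_or_eq with hlt | heq
    · simpa [hfr] using hlt
    · exfalso
      apply hi
      rw [hfr, ← heq]
      exact ⟨0, by norm_num⟩
  · rw [hfr]; exact Int.fract_lt_one _

lemma iter_mem : ∀ (k : ℕ) (lam : ℝ), lam ∈ Set.Ioo (0:ℝ) 1 → Irrational lam →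
    gaussMap^[k] lam ∈ Set.Ioo (0:ℝ) 1 ∧ Irrational (gaussMap^[k] lam)
  | 0, lam, h, hi => ⟨h, hi⟩
  | (k+1), lam, h, hi => by
      rw [Function.iterate_succ_apply]
      obtain ⟨h', hi'⟩ := gauss_mem lam h hi
      exact iter_mem k _ h' hi'

lemma cfA_gaussMap (lam : ℝ) (k : ℕ) : cfA (gaussMap lam) k = cfA lam (k+1) := by
  unfold cfA
  rw [Function.iterate_succ_apply]

lemma den_gaussMap (lam : ℝ) : ∀ k, den (gaussMap lam) k = num lam (k + 1)
  | 0 => by simp [den, num]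
  | 1 => by simp [den, num]
  | (k+2) => by
      have h1 := den_gaussMap lam (k+1)
      have h0 := den_gaussMap lam k
      show cfA (gaussMap lam) k * den (gaussMap lam) (k+1) + den (gaussMap lam) k
          = cfA lam (k+1) * num lam (k+2) + num lam (k+1)
      rw [h1, h0, cfA_gaussMap]

lemma num_gaussMap (lam : ℝ) :
    ∀ k, cfA lam 0 * den (gaussMap lam) k + num (gaussMap lam) k = den lam (k + 1)
  | 0 => by simp [den, num]
  | 1 => by simp [den, num]
  | (k+2) => by
      have h1 := num_gaussMap lam (k+1)
      have h0 := num_gaussMap lam k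
      show cfA lam 0 * (cfA (gaussMap lam) k * den (gaussMap lam) (k+1) + den (gaussMap lam) k)
            + (cfA (gaussMap lam) k * num (gaussMap lam) (k+1) + num (gaussMap lam) k)
          = cfA lam (k+1) * den lam (k+2) + den lam (k+1)
      rw [cfA_gaussMap]
      linear_combination (cfA lam (k+1)) * h1 + h0

lemma Qs_gaussMap (lam : ℝ) (j n : ℕ) : Qs (gaussMap lam) j n = Ps lam (j+1) n := by
  unfold Qs Ps
  split
  · exact den_gaussMap lam (j+1)
  · rw [den_gaussMap lam (j+1), den_gaussMap lam j]

lemma Ps_gaussMap (lam : ℝ) (j n : ℕ) :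
    cfA lam 0 * Qs (gaussMap lam) j n + Ps (gaussMap lam) j n = Qs lam (j+1) n := by
  unfold Qs Ps
  split
  · exact num_gaussMap lam (j+1)
  · linear_combination (n:ℤ) * num_gaussMap lam (j+1) + num_gaussMap lam j

lemma lam_mul_gauss (lam : ℝ) (hne : lam ≠ 0) :
    lam * gaussMap lam = 1 - (cfA lam 0 : ℝ) * lam := by
  unfold gaussMap cfA
  rw [Function.iterate_zero_apply]
  field_simp

lemma Del_gauss_step (lam : ℝ) (hne : lam ≠ 0) (j n : ℕ) :
    lam * Del (gaussMap lam) j n = -Del lam (j+1) n := by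
  have hg := lam_mul_gauss lam hne
  have e1 : ((Qs (gaussMap lam) j n : ℤ) : ℝ) = ((Ps lam (j+1) n : ℤ) : ℝ) := by
    exact_mod_cast congrArg (fun z : ℤ => (z:ℝ)) (Qs_gaussMap lam j n)
  have e2 : (cfA lam 0 : ℝ) * ((Qs (gaussMap lam) j n : ℤ) : ℝ) + ((Ps (gaussMap lam) j n : ℤ) : ℝ)
      = ((Qs lam (j+1) n : ℤ) : ℝ) := by
    exact_mod_cast congrArg (fun z : ℤ => (z:ℝ)) (Ps_gaussMap lam j n)
  unfold Del
  linear_combination ((Qs (gaussMap lam) j n : ℤ) : ℝ) * hg - lam * e2 + e1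

lemma DelPrev_gauss_step (lam : ℝ) (hne : lam ≠ 0) (k : ℕ) :
    lam * DelPrev (gaussMap lam) k = -DelPrev lam (k+1) := by
  have hg := lam_mul_gauss lam hne
  have e1 : ((den (gaussMap lam) k : ℤ) : ℝ) = ((num lam (k+1) : ℤ) : ℝ) := by
    exact_mod_cast congrArg (fun z : ℤ => (z:ℝ)) (den_gaussMap lam k)
  have e2 : (cfA lam 0 : ℝ) * ((den (gaussMap lam) k : ℤ) : ℝ) + ((num (gaussMap lam) k : ℤ) : ℝ)
      = ((den lam (k+1) : ℤ) : ℝ) := by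
    exact_mod_cast congrArg (fun z : ℤ => (z:ℝ)) (num_gaussMap lam k)
  unfold DelPrev
  linear_combination ((den (gaussMap lam) k : ℤ) : ℝ) * hg - lam * e2 + e1

def prodG (lam : ℝ) (m : ℕ) : ℝ := ∏ i ∈ Finset.range m, gaussMap^[i] lam

lemma prodG_succ' (lam : ℝ) (m : ℕ) : prodG lam (m+1) = lam * prodG (gaussMap lam) m := by
  unfold prodG
  rw [Finset.prod_range_succ']
  simp only [Function.iterate_succ_apply, Function.iterate_zero_apply]
  ring

lemma prodG_add (lam : ℝ) (m k : ℕ) :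
    prodG lam (m+k) = prodG lam m * prodG (gaussMap^[m] lam) k := by
  unfold prodG
  rw [Finset.prod_range_add]
  congr 1
  refine Finset.prod_congr rfl fun i _ => ?_
  rw [add_comm m i, Function.iterate_add_apply]

lemma prodG_pos (lam : ℝ) (h : lam ∈ Set.Ioo (0:ℝ) 1) (hirr : Irrational lam) (m : ℕ) :
    0 < prodG lam m := by
  refine Finset.prod_pos fun i _ => ?_
  exact (iter_mem i lam h hirr).1.1

lemma DelPrev_formula : ∀ (m : ℕ) (lam : ℝ), lam ∈ Set.Ioo (0:ℝ) 1 → Irrational lam →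
    DelPrev lam m = (-1:ℝ)^(m+1) * prodG lam m
  | 0, lam, h, hi => by simp [DelPrev, den, num, prodG]
  | (m+1), lam, h, hi => by
      obtain ⟨h', hi'⟩ := gauss_mem lam h hi
      have step := DelPrev_gauss_step lam (ne_of_gt h.1) m
      have ih := DelPrev_formula m (gaussMap lam) h' hi'
      have : DelPrev lam (m+1) = -(lam * DelPrev (gaussMap lam) m) := by linarith
      rw [this, ih, prodG_succ']
      ring

lemma Del_formula : ∀ (m : ℕ) (lam : ℝ), lam ∈ Set.Ioo (0:ℝ) 1 → Irrational lam →
    ∀ (j n : ℕ), prodG lam m * Del (gaussMap^[m] lam) j n = (-1:ℝ)^m * Del lam (m+j) n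
  | 0, lam, h, hi, j, n => by simp [prodG]
  | (m+1), lam, h, hi, j, n => by
      obtain ⟨h', hi'⟩ := gauss_mem lam h hi
      have ih := Del_formula m (gaussMap lam) h' hi' j n
      have step := Del_gauss_step lam (ne_of_gt h.1) (m+j) n
      rw [prodG_succ', Function.iterate_succ_apply]
      have hidx : m + 1 + j = (m + j) + 1 := by omega
      rw [hidx]
      calc lam * prodG (gaussMap lam) m * Del (gaussMap^[m] (gaussMap lam)) j n
          = lam * ((-1:ℝ)^m * Del (gaussMap lam) (m+j) n) := by rw [mul_assoc, ih]
        _ = (-1:ℝ)^m * (lam * Del (gaussMap lam) (m+j) n) := by ring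
        _ = (-1:ℝ)^m * (-Del lam (m+j+1) n) := by rw [step]
        _ = (-1:ℝ)^(m+1) * Del lam (m+j+1) n := by ring

lemma scSet_inter (r : ℝ) (hr : r ≠ 0) (A B : Set ℂ) :
    scSet r (A ∩ B) = scSet r A ∩ scSet r B := by
  unfold scSet
  exact Set.image_inter (mul_right_injective₀ (Complex.ofReal_ne_zero.mpr hr))

lemma scSet_trSet (r c : ℝ) (A : Set ℂ) :
    scSet r (trSet A c) = trSet (scSet r A) (r * c) := by
  unfold scSet trSet
  rw [Set.image_image, Set.image_image]
  have : (fun z : ℂ => (r:ℂ) * (z + (c:ℂ))) = fun z : ℂ => (r:ℂ) * z + ((r*c : ℝ):ℂ) := by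
    funext z; push_cast; ring
  rw [this]

lemma scSet_eq_self {S : Set ℂ} (hS : ∀ (r : ℝ), 0 < r → ∀ z ∈ S, (r:ℂ) * z ∈ S)
    (r : ℝ) (hr : 0 < r) : scSet r S = S := by
  ext z
  constructor
  · rintro ⟨w, hw, rfl⟩; exact hS r hr w hw
  · intro hz
    refine ⟨((r⁻¹:ℝ):ℂ) * z, hS r⁻¹ (inv_pos.mpr hr) z hz, ?_⟩
    show (r:ℂ) * (((r⁻¹:ℝ):ℂ) * z) = z
    rw [← mul_assoc, ← Complex.ofReal_mul, mul_inv_cancel₀ hr.ne', Complex.ofReal_one, one_mul]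

lemma mul_im_eq (r : ℝ) (z : ℂ) : ((r:ℂ)*z).im = r * z.im := by simp [Complex.mul_im]

lemma scSet_coneC0 (a0 r : ℝ) (hr : 0 < r) : scSet r (coneC0 a0) = coneC0 a0 := by
  refine scSet_eq_self (fun s hs z hz => ?_) r hr
  refine ⟨?_, ?_⟩
  · rw [mul_im_eq]; exact mul_nonneg hs.le hz.1
  · rw [Complex.arg_real_mul z hs]; exact hz.2

lemma scSet_coneCd1 (a1 r : ℝ) (hr : 0 < r) : scSet r (coneCd1 a1) = coneCd1 a1 := by
  refine scSet_eq_self (fun s hs z hz => ?_) r hr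
  refine ⟨?_, ?_⟩
  · rw [mul_im_eq]; exact mul_nonneg hs.le hz.1
  · rw [Complex.arg_real_mul z hs]; exact hz.2

lemma scSet_coneCc (a0 a1 r : ℝ) (hr : 0 < r) : scSet r (coneCc a0 a1) = coneCc a0 a1 := by
  refine scSet_eq_self (fun s hs z hz => ?_) r hr
  rcases hz with hz | hz
  · left; simp only [Set.mem_singleton_iff] at hz ⊢; rw [hz, mul_zero]
  · right
    refine ⟨?_, ?_⟩
    · rw [mul_im_eq]; exact mul_pos hs hz.1
    · rw [Complex.arg_real_mul z hs]; exact hz.2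


/-- For irrational `λ ∈ (0,1)` and even `m ≥ 2`, for all `j ≥ 0` and `0 ≤ n < λ_{m+j+1}`,
`(1/|Δ_{m−1,0}(λ)|)·S_{m+j,n}(λ) = S_{j,n}(g^m(λ))`. -/
theorem stmt18 (a0 a1 : ℝ) (h0 : a0 ∈ Set.Ioo 0 Real.pi) (h1 : a1 ∈ Set.Ioo 0 Real.pi)
    (lam : ℝ) (h : lam ∈ Set.Ioo (0 : ℝ) 1) (hirr : Irrational lam)
    (m : ℕ) (hm : 2 ≤ m) (hme : Even m) (j n : ℕ) (hn : (n : ℤ) < cfA lam (m + j)) :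
    scSet (1 / |DelPrev lam m|) (Smn a0 a1 lam (m + j) n) =
      Smn a0 a1 (gaussMap^[m] lam) j n := by
  obtain ⟨hμ, hμi⟩ := iter_mem m lam h hirr
  have hP : 0 < prodG lam m := prodG_pos lam h hirr m
  have hDP : DelPrev lam m = -prodG lam m := by
    rw [DelPrev_formula m lam h hirr, Odd.neg_one_pow (hme.add_one), neg_one_mul]
  have habs : 1 / |DelPrev lam m| = (prodG lam m)⁻¹ := by
    rw [hDP, abs_neg, abs_of_pos hP, one_div]
  set r : ℝ := (prodG lam m)⁻¹ with hrdef
  have hrpos : 0 < r := inv_pos.mpr hP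
  have hrne : r ≠ 0 := hrpos.ne'
  have key1 : ∀ (k n' : ℕ), r * Del lam (m+k) n' = Del (gaussMap^[m] lam) k n' := by
    intro k n'
    have hf := Del_formula m lam h hirr k n'
    rw [hme.neg_one_pow, one_mul] at hf
    rw [← hf, hrdef, inv_mul_cancel_left₀ hP.ne']
  have key2 : ∀ k, r * DelPrev lam (m+k) = DelPrev (gaussMap^[m] lam) k := by
    intro k
    rw [DelPrev_formula (m+k) lam h hirr, DelPrev_formula k _ hμ hμi, prodG_add]
    rw [show m + k + 1 = m + (k+1) from by omega, pow_add, hme.neg_one_pow, one_mul]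
    rw [hrdef]
    field_simp
  rw [habs]
  have hje : Even (m+j) ↔ Even j := by
    rw [Nat.even_add]; tauto
  have c1 : r * -(Del lam (m+j) 0) = -(Del (gaussMap^[m] lam) j 0) := by
    rw [← key1 j 0]; ring
  have c2 : r * -(Del lam (m+j) (n+1)) = -(Del (gaussMap^[m] lam) j (n+1)) := by
    rw [← key1 j (n+1)]; ring
  have c3 : r * -((n:ℝ) * Del lam (m+j) 0 + DelPrev lam (m+j))
      = -((n:ℝ) * Del (gaussMap^[m] lam) j 0 + DelPrev (gaussMap^[m] lam) j) := by
    rw [← key1 j 0, ← key2 j]; ring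
  unfold Smn
  by_cases hj : Even j
  · rw [if_pos (hje.mpr hj), if_pos hj]
    rw [scSet_inter r hrne, scSet_inter r hrne, scSet_inter r hrne,
        scSet_trSet, scSet_trSet, scSet_trSet,
        scSet_coneC0 a0 r hrpos, scSet_coneCc a0 a1 r hrpos, scSet_coneCd1 a1 r hrpos,
        c1, c2, c3]
  · rw [if_neg (fun hh => hj (hje.mp hh)), if_neg hj]
    rw [scSet_inter r hrne, scSet_inter r hrne, scSet_inter r hrne,
        scSet_trSet, scSet_trSet, scSet_trSet,
        scSet_coneC0 a0 r hrpos, scSet_coneCc a0 a1 r hrpos, scSet_coneCd1 a1 r hrpos,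
        c1, c2, c3]
end
end
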